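/- For all integers q ≥ 2 and n ≥ 1, and under each of the scenarios (∗•) and (••), the family 𝓖_q ∪ 𝓛_q is n-cell implementable if and only if q ≤ 2n. -/

import Mathlib

/-- The alphabet 𝔹• = {0, 1, ∗, •}. -/
inductive BB : Type
  | zero
  | one
  | star
  | reject
deriving DecidableEq

instance : Fintype BB where
  elems := {BB.zero, BB.one, BB.star, BB.reject}
  complete := by intro x; cases x <;> simp

/-- The cell function T : 𝔹• × 𝔹• → 𝔹: T(u,ϑ) = 1 iff u = ∗, or ϑ = ∗,
or u,ϑ ∈ 𝔹 with u = ϑ. -/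
def Tcell : BB → BB → Bool
  | BB.star, _ => true
  | _, BB.star => true
  | BB.zero, BB.zero => true
  | BB.one, BB.one => true
  | _, _ => false

/-- The word-level function T(u,ϑ) = ⋀_{j<n} T(u_j, ϑ_j). -/
def Tword {n : ℕ} (u θ : Fin n → BB) : Bool :=
  decide (∀ j, Tcell (u j) (θ j) = true)

/-- The alphabet 𝔹 = {0,1} ⊆ 𝔹•. -/
def Bcirc : Set BB := {BB.zero, BB.one}

/-- The alphabet 𝔹∗ = {0,1,∗} ⊆ 𝔹•. -/
def Bstar : Set BB := {BB.zero, BB.one, BB.star}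

/-- The full alphabet 𝔹•. -/
def Bdot : Set BB := Set.univ

/-- A family Φ of functions {0,…,q−1} → 𝔹 is n-cell implementable under
scenario (A,B) if there are mappings u : {0,…,q−1} → A^n and ϑ : Φ → B^n
with f(x) = T(u(x), ϑ(f)) for all f ∈ Φ and x. -/
def Implementable (A B : Set BB) (n q : ℕ) (Φ : Set (Fin q → Bool)) : Prop :=
  ∃ u : Fin q → Fin n → BB, ∃ θ : (Fin q → Bool) → Fin n → BB,
    (∀ x j, u x j ∈ A) ∧ (∀ f ∈ Φ, ∀ j, θ f j ∈ B) ∧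
    (∀ f ∈ Φ, ∀ x, f x = Tword (u x) (θ f))

/-- The family 𝓔_q = { x ↦ [x = t] : t ∈ [q⟩ }. -/
def Eset (q : ℕ) : Set (Fin q → Bool) :=
  { f | ∃ t : Fin q, f = fun x => decide (x = t) }

/-- The family 𝓝_q = { x ↦ [x ≠ t] : t ∈ [q⟩ }. -/
def Nset (q : ℕ) : Set (Fin q → Bool) :=
  { f | ∃ t : Fin q, f = fun x => decide (x ≠ t) }

/-- The family 𝓖_q = { x ↦ [x ≥ t] : t ∈ [q⟩ }. -/
def Gset (q : ℕ) : Set (Fin q → Bool) :=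
  { f | ∃ t : Fin q, f = fun x => decide (t ≤ x) }

/-- The family 𝓛_q = { x ↦ [x ≤ t] : t ∈ [q⟩ }. -/
def Lset (q : ℕ) : Set (Fin q → Bool) :=
  { f | ∃ t : Fin q, f = fun x => decide (x ≤ t) }

section GLaux

/-- Interpret a Bool as a binary query symbol. -/
def bbit (b : Bool) : BB := if b then BB.one else BB.zero

lemma Tcell_star_right (y : BB) : Tcell y BB.star = true := by cases y <;> rfl

lemma pick : ∀ w v : BB, Tcell w v = false →
    ∃ b : Bool, Tcell w (bbit b) = false ∧
      ∀ y, Tcell y v = true → Tcell y (bbit b) = true := by decide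

/-- Encoding: cell `j` stores 0 at value `2j`, 1 at `2j+1`, `∗` elsewhere. -/
def ucon (q n : ℕ) : Fin q → Fin n → BB := fun x j =>
  if (x : ℕ) = 2 * j then BB.zero
  else if (x : ℕ) = 2 * j + 1 then BB.one
  else BB.star

/-- Query for `[x ≥ t]`. -/
def thg (q n : ℕ) (t : Fin q) : Fin n → BB := fun j =>
  if 2 * (j : ℕ) + 1 < (t : ℕ) then BB.reject
  else if 2 * (j : ℕ) + 1 = (t : ℕ) then BB.one
  else BB.star

/-- Query for `[x ≤ t]`. -/
def thl (q n : ℕ) (t : Fin q) : Fin n → BB := fun j =>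
  if (t : ℕ) < 2 * j then BB.reject
  else if (t : ℕ) = 2 * j then BB.zero
  else BB.star

lemma gver {q n : ℕ} (hqn : q ≤ 2 * n) (t x : Fin q) :
    decide (t ≤ x) = Tword (ucon q n x) (thg q n t) := by
  rw [Tword, decide_eq_decide]
  constructor
  · intro h j
    have hx : (t : ℕ) ≤ (x : ℕ) := h
    unfold ucon thg
    split_ifs <;> first | rfl | omega
  · intro h
    rw [Fin.le_def]
    by_contra hx
    push_neg at hx
    have hj0 : (x : ℕ) / 2 < n := by omega
    have hthis := h ⟨(x : ℕ) / 2, hj0⟩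
    unfold ucon thg at hthis
    simp only [Fin.val_mk] at hthis
    split_ifs at hthis <;> (try simp [Tcell] at hthis) <;> omega

lemma lver {q n : ℕ} (hqn : q ≤ 2 * n) (t x : Fin q) :
    decide (x ≤ t) = Tword (ucon q n x) (thl q n t) := by
  rw [Tword, decide_eq_decide]
  constructor
  · intro h j
    have hx : (x : ℕ) ≤ (t : ℕ) := h
    unfold ucon thl
    split_ifs <;> first | rfl | omega
  · intro h
    rw [Fin.le_def]
    by_contra hx
    push_neg at hx
    have hj0 : (x : ℕ) / 2 < n := by omega
    have hthis := h ⟨(x : ℕ) / 2, hj0⟩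
    unfold ucon thl at hthis
    simp only [Fin.val_mk] at hthis
    split_ifs at hthis <;> (try simp [Tcell] at hthis) <;> omega

lemma implementable_mono {A A' B : Set BB} {n q : ℕ} {Φ : Set (Fin q → Bool)}
    (hA : A ⊆ A') (h : Implementable A B n q Φ) : Implementable A' B n q Φ := by
  obtain ⟨u, θ, h1, h2, h3⟩ := h
  exact ⟨u, θ, fun x j => hA (h1 x j), h2, h3⟩

lemma construct (q n : ℕ) (hqn : q ≤ 2 * n) :
    Implementable Bstar Bdot n q (Gset q ∪ Lset q) := by
  classical
  refine ⟨ucon q n, fun f =>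
    if h : ∃ t : Fin q, f = fun x => decide (t ≤ x) then thg q n h.choose
    else if h2 : ∃ t : Fin q, f = fun x => decide (x ≤ t) then thl q n h2.choose
    else fun _ => BB.star, ?_, ?_, ?_⟩
  · intro x j
    unfold ucon
    split_ifs <;> simp [Bstar]
  · intro f _ j
    exact Set.mem_univ _
  · intro f hf x
    beta_reduce
    by_cases h : ∃ t : Fin q, f = fun x => decide (t ≤ x)
    · rw [dif_pos h]
      exact (congrFun h.choose_spec x).trans (gver hqn h.choose x)
    · have hL : ∃ t : Fin q, f = fun x => decide (x ≤ t) := by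
        rcases hf with hG | hL
        · exact absurd hG h
        · exact hL
      rw [dif_neg h, dif_pos hL]
      exact (congrFun hL.choose_spec x).trans (lver hqn hL.choose x)

lemma lower (q n : ℕ) (hq : 2 ≤ q)
    (h : Implementable Bdot Bdot n q (Gset q ∪ Lset q)) : q ≤ 2 * n := by
  classical
  obtain ⟨u, θ, -, -, himp⟩ := h
  have hG : ∀ t : Fin q, 1 ≤ (t : ℕ) → ∃ p : Fin n × Bool,
      Tcell (u ⟨(t : ℕ) - 1, by omega⟩ p.1) (bbit p.2) = false ∧
      ∀ x : Fin q, t ≤ x → Tcell (u x p.1) (bbit p.2) = true := by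
    intro t ht
    set f : Fin q → Bool := fun x => decide (t ≤ x) with hf
    have hfΦ : f ∈ Gset q ∪ Lset q := Or.inl ⟨t, rfl⟩
    have h1 := himp f hfΦ ⟨(t : ℕ) - 1, by omega⟩
    have h1' : f ⟨(t : ℕ) - 1, by omega⟩ = false := by
      simp only [hf, decide_eq_false_iff_not, Fin.le_def, Fin.val_mk]
      omega
    have hT : Tword (u ⟨(t : ℕ) - 1, by omega⟩) (θ f) = false := by
      rw [← h1, h1']
    rw [Tword, decide_eq_false_iff_not] at hT
    push_neg at hT
    obtain ⟨j, hj⟩ := hT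
    replace hj := Bool.eq_false_iff.mpr hj
    have h3 : ∀ x : Fin q, t ≤ x → ∀ j' : Fin n, Tcell (u x j') (θ f j') = true := by
      intro x hx j'
      have h4 := himp f hfΦ x
      have hfx : f x = true := by simp only [hf, decide_eq_true_eq]; exact hx
      rw [hfx] at h4
      rw [Tword] at h4
      exact of_decide_eq_true h4.symm j'
    obtain ⟨b, hb1, hb2⟩ := pick (u ⟨(t : ℕ) - 1, by omega⟩ j) (θ f j) hj
    exact ⟨(j, b), hb1, fun x hx => hb2 _ (h3 x hx j)⟩
  have hLw : ∃ p : Fin n × Bool,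
      Tcell (u ⟨q - 1, by omega⟩ p.1) (bbit p.2) = false ∧
      ∀ x : Fin q, (x : ℕ) < q - 1 → Tcell (u x p.1) (bbit p.2) = true := by
    set t2 : Fin q := ⟨q - 2, by omega⟩ with ht2
    set f : Fin q → Bool := fun x => decide (x ≤ t2) with hf
    have hfΦ : f ∈ Gset q ∪ Lset q := Or.inr ⟨t2, rfl⟩
    have h1 := himp f hfΦ ⟨q - 1, by omega⟩
    have h1' : f ⟨q - 1, by omega⟩ = false := by
      simp only [hf, decide_eq_false_iff_not, Fin.le_def, Fin.val_mk, ht2]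
      omega
    have hT : Tword (u ⟨q - 1, by omega⟩) (θ f) = false := by
      rw [← h1, h1']
    rw [Tword, decide_eq_false_iff_not] at hT
    push_neg at hT
    obtain ⟨j, hj⟩ := hT
    replace hj := Bool.eq_false_iff.mpr hj
    have h3 : ∀ x : Fin q, (x : ℕ) < q - 1 → ∀ j' : Fin n,
        Tcell (u x j') (θ f j') = true := by
      intro x hx j'
      have h4 := himp f hfΦ x
      have hfx : f x = true := by
        simp only [hf, decide_eq_true_eq, Fin.le_def, ht2]
        omega
      rw [hfx] at h4
      rw [Tword] at h4
      exact of_decide_eq_true h4.symm j'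
    obtain ⟨b, hb1, hb2⟩ := pick (u ⟨q - 1, by omega⟩ j) (θ f j) hj
    exact ⟨(j, b), hb1, fun x hx => hb2 _ (h3 x hx j)⟩
  choose W hW1 hW2 using hG
  obtain ⟨pl, hl1, hl2⟩ := hLw
  set F : Fin q → Fin n × Bool := fun t =>
    if h : 1 ≤ (t : ℕ) then W t h else pl with hF
  have key : ∀ a b : Fin q, (a : ℕ) < (b : ℕ) → F a ≠ F b := by
    intro a b hlt heq
    have hb1 : 1 ≤ (b : ℕ) := by omega
    have hFb : F b = W b hb1 := dif_pos hb1
    by_cases ha1 : 1 ≤ (a : ℕ)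
    · have hFa : F a = W a ha1 := dif_pos ha1
      have hw : W a ha1 = W b hb1 := by rw [← hFa, ← hFb, heq]
      have h1 := hW1 b hb1
      have h2 := hW2 a ha1 ⟨(b : ℕ) - 1, by omega⟩
        (by rw [Fin.le_def]; simp only [Fin.val_mk]; omega)
      rw [hw] at h2
      exact absurd (h1.symm.trans h2) (by decide)
    · have hFa : F a = pl := dif_neg (by omega)
      have hw : pl = W b hb1 := by rw [← hFa, ← hFb, heq]
      have h1 := hW1 b hb1
      have h2 := hl2 ⟨(b : ℕ) - 1, by omega⟩ (by simp only [Fin.val_mk]; omega)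
      rw [← hw] at h1
      exact absurd (h1.symm.trans h2) (by decide)
  have hinj : Function.Injective F := by
    intro a b hab
    rcases lt_trichotomy (a : ℕ) (b : ℕ) with hlt | heqv | hgt
    · exact absurd hab (key a b hlt)
    · exact Fin.ext heqv
    · exact absurd hab.symm (key b a hgt)
  have hcard := Fintype.card_le_of_injective F hinj
  simp only [Fintype.card_fin, Fintype.card_prod, Fintype.card_bool] at hcard
  omega

end GLaux

theorem GLset_implementable_starReject_rejectReject (q n : ℕ)
    (hq : 2 ≤ q) (hn : 1 ≤ n) :
    (Implementable Bstar Bdot n q (Gset q ∪ Lset q) ↔ q ≤ 2 * n) ∧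
    (Implementable Bdot Bdot n q (Gset q ∪ Lset q) ↔ q ≤ 2 * n) := by
  have hsub : Bstar ⊆ Bdot := fun x _ => Set.mem_univ x
  constructor
  · constructor
    · intro h
      exact lower q n hq (implementable_mono hsub h)
    · intro h
      exact construct q n h
  · constructor
    · intro h
      exact lower q n hq h
    · intro h
      exact implementable_mono hsub (construct q n h)
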